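/- arXiv:1805.08869 — 2 statements merged into one kernel-verified Lean document; each statement's English description precedes it below -/
import Mathlib

section
/- Let p be a prime, let G be a finite group possessing a normal Sylow p-subgroup P such that the quotient G/P is cyclic (necessarily of order prime to p), and let Γ₁, Γ₂ be subgroups of G with P ⊆ Γ₁. Then the order of Γ₁ ∩ Γ₂ equals gcd(|Γ₁|, |Γ₂|). -/
/-- The subgroup of elements of order dividing `d`, in a group whose multiplication
is commutative. -/
private def powKer {C : Type*} [Group C] (hcomm : ∀ a b : C, a * b = b * a) (d : ℕ) :
    Subgroup C where
  carrier := {x | x ^ d = 1}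
  one_mem' := one_pow d
  mul_mem' := by
    intro a b ha hb
    have h : Commute a b := hcomm a b
    simp only [Set.mem_setOf_eq] at *
    rw [h.mul_pow, ha, hb, one_mul]
  inv_mem' := by
    intro a ha
    simp only [Set.mem_setOf_eq] at *
    rw [inv_pow, ha, inv_one]

private lemma mem_powKer {C : Type*} [Group C] (hcomm : ∀ a b : C, a * b = b * a) (d : ℕ)
    (x : C) : x ∈ powKer hcomm d ↔ x ^ d = 1 := Iff.rfl

/-- In a finite cyclic group, `|H ⊓ K| = gcd (|H|, |K|)`. -/
private lemma card_inf_cyclic {C : Type*} [Group C] [Finite C] [IsCyclic C]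
    (H K : Subgroup C) :
    Nat.card ↥(H ⊓ K) = Nat.gcd (Nat.card ↥H) (Nat.card ↥K) := by
  have hcomm : ∀ a b : C, a * b = b * a := by
    letI := IsCyclic.commGroup (α := C)
    exact fun a b => mul_comm a b
  obtain ⟨g, hg⟩ := IsCyclic.exists_ofOrder_eq_natCard (α := C)
  -- the cardinality of `powKer hcomm d` for `d ∣ Nat.card C`
  have cardE : ∀ d : ℕ, d ∣ Nat.card C → Nat.card ↥(powKer hcomm d) = d := by
    intro d hd
    have h1 : Nat.card ↥(powKer hcomm d) ∣ d := by
      obtain ⟨z, hz⟩ := IsCyclic.exists_ofOrder_eq_natCard (α := ↥(powKer hcomm d))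
      have hz1 : (z : C) ^ d = 1 := z.2
      have h2 : orderOf (z : C) ∣ d := orderOf_dvd_of_pow_eq_one hz1
      have hco : orderOf (z : C) = orderOf z :=
        orderOf_injective (powKer hcomm d).subtype Subtype.coe_injective z
      rwa [hco, hz] at h2
    have h2 : d ∣ Nat.card ↥(powKer hcomm d) := by
      have hmem : g ^ (Nat.card C / d) ∈ powKer hcomm d := by
        rw [mem_powKer, ← pow_mul, Nat.div_mul_cancel hd, ← hg, pow_orderOf_eq_one]
      have hord : orderOf (g ^ (Nat.card C / d)) = d := by
        rw [orderOf_pow, hg, Nat.gcd_eq_right (Nat.div_dvd_of_dvd hd),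
          Nat.div_div_self hd Nat.card_pos.ne']
      calc d = Nat.card (Subgroup.zpowers (g ^ (Nat.card C / d))) := by
              rw [Nat.card_zpowers, hord]
        _ ∣ Nat.card ↥(powKer hcomm d) :=
              Subgroup.card_dvd_of_le (Subgroup.zpowers_le.mpr hmem)
    exact Nat.dvd_antisymm h1 h2
  -- every subgroup equals `powKer` of its cardinality
  have eqE : ∀ L : Subgroup C, L = powKer hcomm (Nat.card ↥L) := by
    intro L
    apply Subgroup.eq_of_le_of_card_ge
    · intro x hx
      rw [mem_powKer]
      have h := pow_card_eq_one' (G := ↥L) (x := ⟨x, hx⟩)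
      have h2 := congrArg Subtype.val h
      simp only [SubmonoidClass.coe_pow, OneMemClass.coe_one] at h2
      exact h2
    · rw [cardE _ (Subgroup.card_subgroup_dvd_card L)]
  have key : H ⊓ K = powKer hcomm (Nat.gcd (Nat.card ↥H) (Nat.card ↥K)) := by
    ext x
    rw [Subgroup.mem_inf, mem_powKer]
    constructor
    · rintro ⟨hxH, hxK⟩
      have h1 : x ^ Nat.card ↥H = 1 := by
        have := (eqE H) ▸ hxH
        rwa [mem_powKer] at this
      have h2 : x ^ Nat.card ↥K = 1 := by
        have := (eqE K) ▸ hxK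
        rwa [mem_powKer] at this
      rw [← orderOf_dvd_iff_pow_eq_one] at h1 h2 ⊢
      exact Nat.dvd_gcd h1 h2
    · intro hx
      rw [← orderOf_dvd_iff_pow_eq_one] at hx
      constructor
      · rw [eqE H, mem_powKer, ← orderOf_dvd_iff_pow_eq_one]
        exact hx.trans (Nat.gcd_dvd_left _ _)
      · rw [eqE K, mem_powKer, ← orderOf_dvd_iff_pow_eq_one]
        exact hx.trans (Nat.gcd_dvd_right _ _)
  rw [key, cardE _ ((Nat.gcd_dvd_left _ _).trans (Subgroup.card_subgroup_dvd_card H))]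

/-- `|H| = |ker f ⊓ H| ⬝ |f(H)|`. -/
private lemma card_eq_card_inf_ker_mul_card_map {G Q : Type*} [Group G] [Group Q]
    (f : G →* Q) (H : Subgroup G) :
    Nat.card ↥H = Nat.card ↥(f.ker ⊓ H) * Nat.card ↥(H.map f) := by
  have h1 : Nat.card ↥(f.ker.subgroupOf H) * (f.ker.subgroupOf H).index = Nat.card ↥H :=
    Subgroup.card_mul_index _
  have h2 : (f.ker.subgroupOf H).index = Nat.card ↥(H.map f) := Subgroup.relIndex_ker (K := H) f
  have h3 : Nat.card ↥(f.ker.subgroupOf H) = Nat.card ↥(f.ker ⊓ H) := by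
    rw [← Subgroup.inf_subgroupOf_right]
    exact Nat.card_congr (Subgroup.subgroupOfEquivOfLe inf_le_right).toEquiv
  rw [← h1, h2, h3]

/-- If `ker f ≤ H`, then `f(H ⊓ K) = f(H) ⊓ f(K)`. -/
private lemma map_inf_of_ker_le {G Q : Type*} [Group G] [Group Q]
    (f : G →* Q) {H K : Subgroup G} (h : f.ker ≤ H) :
    (H ⊓ K).map f = H.map f ⊓ K.map f := by
  apply le_antisymm
  · exact le_inf (Subgroup.map_mono inf_le_left) (Subgroup.map_mono inf_le_right)
  · rintro y ⟨hy₁, hy₂⟩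
    obtain ⟨x₁, hx₁, rfl⟩ := hy₁
    obtain ⟨x₂, hx₂, hx⟩ := hy₂
    refine ⟨x₂, ⟨?_, hx₂⟩, hx⟩
    have hk : x₂ * x₁⁻¹ ∈ f.ker := by
      rw [MonoidHom.mem_ker, map_mul, map_inv, hx, mul_inv_cancel]
    have : x₂ * x₁⁻¹ ∈ H := h hk
    simpa using mul_mem this hx₁

/-- Let `p` be a prime, `G` a finite group with a normal Sylow `p`-subgroup `P`
such that `G/P` is cyclic, and let `Γ₁, Γ₂` be subgroups of `G` with `P ⊆ Γ₁`.
Then `|Γ₁ ∩ Γ₂| = gcd(|Γ₁|, |Γ₂|)`. -/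
theorem card_inf_eq_gcd_card_of_normal_sylow_le_cyclic_quotient
    (p : ℕ) [Fact p.Prime] {G : Type*} [Group G] [Finite G]
    (P : Sylow p G) [(P : Subgroup G).Normal]
    [IsCyclic (G ⧸ (P : Subgroup G))]
    (Γ₁ Γ₂ : Subgroup G) (hP : (P : Subgroup G) ≤ Γ₁) :
    Nat.card ↥(Γ₁ ⊓ Γ₂) = Nat.gcd (Nat.card ↥Γ₁) (Nat.card ↥Γ₂) := by
  set Pg : Subgroup G := (P : Subgroup G) with hPg
  let f := QuotientGroup.mk' Pg
  have hker : f.ker = Pg := QuotientGroup.ker_mk' Pg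
  -- cardinalities
  set a := Nat.card ↥(Γ₁.map f) with ha
  set b := Nat.card ↥(Γ₂.map f) with hb
  set k := Nat.card ↥(Pg ⊓ Γ₂) with hk
  have hΓ₁ : Nat.card ↥Γ₁ = Nat.card ↥Pg * a := by
    rw [card_eq_card_inf_ker_mul_card_map f Γ₁, hker, inf_eq_left.mpr hP]
  have hΓ₂ : Nat.card ↥Γ₂ = k * b := by
    rw [card_eq_card_inf_ker_mul_card_map f Γ₂, hker]
  have hinf : Nat.card ↥(Γ₁ ⊓ Γ₂) = k * Nat.gcd a b := by
    rw [card_eq_card_inf_ker_mul_card_map f (Γ₁ ⊓ Γ₂), hker,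
      ← inf_assoc, inf_eq_left.mpr hP, map_inf_of_ker_le f (hker.le.trans hP),
      card_inf_cyclic (Γ₁.map f) (Γ₂.map f)]
  -- arithmetic
  obtain ⟨t, ht⟩ : k ∣ Nat.card ↥Pg := Subgroup.card_dvd_of_le inf_le_left
  have hcop : Nat.Coprime t b := by
    have h1 : t ∣ Nat.card ↥Pg := ⟨k, by rw [ht, mul_comm]⟩
    have h2 : b ∣ Pg.index := Subgroup.card_subgroup_dvd_card (Γ₂.map f)
    exact Nat.Coprime.coprime_dvd_left h1 ((P.card_coprime_index).coprime_dvd_right h2)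
  rw [hinf, hΓ₁, hΓ₂, ht, mul_assoc, Nat.gcd_mul_left, hcop.gcd_mul_left_cancel a]
end

section
/- Let L = ℚ(j, ³√3) where j = exp(2iπ/3) is a primitive cube root of unity, and let 𝔮 be a prime ideal of the ring of integers of L lying over 𝔭 = 3ℤ. Then the ramification index e(𝔮/𝔭) equals 6; in particular, with K₁ = ℚ(³√3) and K₂ = ℚ(j·³√3), 𝔭₁ = 𝔮 ∩ O_{K₁}, 𝔭₂ = 𝔮 ∩ O_{K₂}, one has e(𝔭₁/𝔭) = e(𝔭₂/𝔭) = 3 and e(𝔮/𝔭) = 6 does not divide e(𝔭₁/𝔭) × e(𝔭₂/𝔭) = 9. -/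
open NumberField IntermediateField

open Ideal Polynomial UniqueFactorizationMonoid Module


-- upper bound: e ≤ [F : ℚ]
lemma aux_e_le (F : Type*) [Field F] [NumberField F]
    (Q : Ideal (𝓞 F)) [hQp : Q.IsPrime]
    (hQ : Q.comap (algebraMap ℤ (𝓞 F)) = Ideal.span {(3 : ℤ)}) :
    Ideal.ramificationIdx' (Ideal.span {(3 : ℤ)}) Q ≤
      Module.finrank ℚ F := by
  classical
  haveI hmax : (Ideal.span {(3 : ℤ)}).IsMaximal :=
    PrincipalIdealRing.isMaximal_of_irreducible Int.prime_three.irreducible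
  haveI : Q.LiesOver (Ideal.span {(3 : ℤ)}) := ⟨hQ.symm⟩
  haveI : Module.Finite ℤ (𝓞 F) := ⟨IsNoetherian.noetherian ⊤⟩
  have hle : Ideal.map (algebraMap ℤ (𝓞 F)) (Ideal.span {(3 : ℤ)}) ≤ Q :=
    Ideal.map_le_iff_le_comap.mpr (le_of_eq hQ.symm)
  have hmapne : Ideal.map (algebraMap ℤ (𝓞 F)) (Ideal.span {(3 : ℤ)}) ≠ ⊥ := by
    rw [Ideal.map_span, Set.image_singleton, Ne, Ideal.span_singleton_eq_bot, map_ofNat]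
    intro h
    simpa using congrArg (algebraMap (𝓞 F) F) h
  have hQ0 : Q ≠ ⊥ := fun h => hmapne (le_bot_iff.mp (h ▸ hle))
  have hirr : Irreducible Q := (Ideal.prime_of_isPrime hQ0 hQp).irreducible
  obtain ⟨Q', hQ'mem, hQ'eq⟩ :=
    UniqueFactorizationMonoid.exists_mem_factors_of_dvd hmapne hirr (Ideal.dvd_iff_le.mpr hle)
  rw [associated_iff_eq] at hQ'eq
  have hsum := Ideal.sum_ramification_inertia (R := ℤ) (S := 𝓞 F)
    (p := Ideal.span {(3 : ℤ)}) ℚ F (by simp [Ideal.span_singleton_eq_bot])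
  refine le_trans (Nat.le_mul_of_pos_right _ (Ideal.inertiaDeg'_pos (Ideal.span {(3 : ℤ)}) Q)) (le_trans ?_ hsum.le)
  exact Finset.single_le_sum (f := fun P => Ideal.ramificationIdx' (Ideal.span {(3 : ℤ)}) P * Ideal.inertiaDeg' (Ideal.span {(3 : ℤ)}) P) (fun _ _ => Nat.zero_le _) (Multiset.mem_toFinset.mpr (hQ'eq ▸ hQ'mem))

-- lower bound: if u * x ^ n = 3 with u unit and x ∈ Q then n ∣ e and e ≠ 0
lemma aux_dvd (F : Type*) [Field F] [NumberField F]
    (Q : Ideal (𝓞 F)) [hQp : Q.IsPrime]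
    (x u : 𝓞 F) (hu : IsUnit u) {n : ℕ} (hn : 0 < n)
    (hx : u * x ^ n = 3) (hxQ : x ∈ Q) :
    n ∣ Ideal.ramificationIdx' (Ideal.span {(3 : ℤ)}) Q ∧
      Ideal.ramificationIdx' (Ideal.span {(3 : ℤ)}) Q ≠ 0 := by
  classical
  have h3 : (3 : 𝓞 F) ≠ 0 := fun h => by simpa using congrArg (algebraMap (𝓞 F) F) h
  have hx0 : x ≠ 0 := by
    rintro rfl
    rw [zero_pow hn.ne', mul_zero] at hx
    exact h3 hx.symm
  have hassoc : Associated (x ^ n) (3 : 𝓞 F) := ⟨hu.unit, by rw [mul_comm, hu.unit_spec]; exact hx⟩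
  have hmap : Ideal.map (algebraMap ℤ (𝓞 F)) (Ideal.span {(3 : ℤ)}) = Ideal.span {x} ^ n := by
    rw [Ideal.map_span, Set.image_singleton, map_ofNat, Ideal.span_singleton_pow]
    exact (Ideal.span_singleton_eq_span_singleton.mpr hassoc).symm
  have hQ0 : Q ≠ ⊥ := fun h => hx0 (Ideal.mem_bot.mp (h ▸ hxQ))
  have hspan0 : Ideal.span {x} ≠ (⊥ : Ideal (𝓞 F)) := by
    simpa [Ideal.span_singleton_eq_bot] using hx0
  have hmapne : Ideal.map (algebraMap ℤ (𝓞 F)) (Ideal.span {(3 : ℤ)}) ≠ ⊥ := by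
    rw [hmap, ← Ideal.zero_eq_bot]
    exact pow_ne_zero n (by rw [Ideal.zero_eq_bot]; exact hspan0)
  have hirr : Irreducible Q := (Ideal.prime_of_isPrime hQ0 hQp).irreducible
  obtain ⟨Q', hQ'mem, hQ'eq⟩ :=
    UniqueFactorizationMonoid.exists_mem_normalizedFactors_of_dvd hspan0 hirr
      (Ideal.dvd_iff_le.mpr ((Ideal.span_singleton_le_iff_mem _).mpr hxQ))
  rw [associated_iff_eq] at hQ'eq
  rw [Ideal.IsDedekindDomain.ramificationIdx'_eq_normalizedFactors_count hmapne hQp hQ0, hmap,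
    UniqueFactorizationMonoid.normalizedFactors_pow, Multiset.count_nsmul]
  exact ⟨dvd_mul_right _ _,
    Nat.mul_ne_zero hn.ne' (Multiset.count_ne_zero.mpr (hQ'eq ▸ hQ'mem))⟩

lemma no_rat_cube_root (b : ℚ) : b ^ 3 ≠ 3 := by
  intro h
  have hb : b ≠ 0 := by rintro rfl; norm_num at h
  haveI : Fact (Nat.Prime 3) := ⟨by norm_num⟩
  have h1 : padicValRat 3 (b ^ 3) = 3 * padicValRat 3 b := padicValRat.pow b
  have h2 : padicValRat 3 ((3 : ℕ) : ℚ) = 1 := padicValRat.self (by norm_num)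
  rw [h] at h1
  norm_num at h2 h1
  omega

set_option maxHeartbeats 1000000 in
set_option synthInstance.maxHeartbeats 100000 in
/-- Let `L = ℚ(j, ³√3)` with `j` a primitive cube root of unity and `c = ³√3`, and let
`𝔮` be a prime ideal of `𝓞 L` lying over `𝔭 = 3ℤ`. Set `K₁ = ℚ(³√3)`, `K₂ = ℚ(j·³√3)`,
`𝔭₁ = 𝔮 ∩ 𝓞 K₁`, `𝔭₂ = 𝔮 ∩ 𝓞 K₂`. Then `e(𝔭₁/𝔭) = e(𝔭₂/𝔭) = 3` and
`e(𝔮/𝔭) = 6`, which does not divide `e(𝔭₁/𝔭) × e(𝔭₂/𝔭) = 9`. -/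
theorem ramificationIdx_not_dvd_mul_example
    (L : Type*) [Field L] [NumberField L]
    (j c : L) (hj : IsPrimitiveRoot j 3) (hc : c ^ 3 = 3)
    (hL : IntermediateField.adjoin ℚ {j, c} = ⊤)
    (K₁ K₂ : IntermediateField ℚ L) (hK₁ : K₁ = ℚ⟮c⟯) (hK₂ : K₂ = ℚ⟮j * c⟯)
    (𝔮 : Ideal (𝓞 L)) [𝔮.IsPrime]
    (h𝔮 : 𝔮.comap (algebraMap ℤ (𝓞 L)) = Ideal.span {(3 : ℤ)})
    (𝔭₁ : Ideal (𝓞 K₁)) (h𝔭₁ : 𝔭₁ = 𝔮.comap (algebraMap (𝓞 K₁) (𝓞 L)))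
    (𝔭₂ : Ideal (𝓞 K₂)) (h𝔭₂ : 𝔭₂ = 𝔮.comap (algebraMap (𝓞 K₂) (𝓞 L))) :
    Ideal.ramificationIdx' (Ideal.span {(3 : ℤ)}) 𝔮 = 6 ∧
    Ideal.ramificationIdx' (Ideal.span {(3 : ℤ)}) 𝔭₁ = 3 ∧
    Ideal.ramificationIdx' (Ideal.span {(3 : ℤ)}) 𝔭₂ = 3 ∧
    ¬ Ideal.ramificationIdx' (Ideal.span {(3 : ℤ)}) 𝔮 ∣
        Ideal.ramificationIdx' (Ideal.span {(3 : ℤ)}) 𝔭₁ *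
          Ideal.ramificationIdx' (Ideal.span {(3 : ℤ)}) 𝔭₂ := by
  classical
  subst hK₁ hK₂ h𝔭₁ h𝔭₂
  have hQp : 𝔮.IsPrime := ‹_›
  -- polynomial facts
  have hirr3 : Irreducible ((X : ℚ[X]) ^ 3 - C 3) :=
    X_pow_sub_C_irreducible_of_prime Nat.prime_three no_rat_cube_root
  have hj3 : j ^ 3 = 1 := hj.pow_eq_one
  have hjne : j ≠ 1 := hj.ne_one (by norm_num)
  have hjsq : j ^ 2 + j + 1 = 0 := by
    have h0 : (j - 1) * (j ^ 2 + j + 1) = 0 := by linear_combination hj3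
    rcases mul_eq_zero.mp h0 with h | h
    · exact absurd (sub_eq_zero.mp h) hjne
    · exact h
  have hjc : (j * c) ^ 3 = 3 := by rw [mul_pow, hj3, one_mul, hc]
  -- finrank of the two cubic fields
  have finrank_cubic : ∀ x : L, x ^ 3 = 3 → Module.finrank ℚ ℚ⟮x⟯ = 3 := by
    intro x hx
    have hint : IsIntegral ℚ x := ⟨X ^ 3 - C 3, monic_X_pow_sub_C _ (by norm_num), by simp [hx]⟩
    have hmp : minpoly ℚ x = X ^ 3 - C 3 :=
      (minpoly.eq_of_irreducible_of_monic hirr3 (by simp [hx])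
        (monic_X_pow_sub_C _ (by norm_num))).symm
    rw [IntermediateField.adjoin.finrank hint, hmp]
    simp
  have hK1rank : Module.finrank ℚ ℚ⟮c⟯ = 3 := finrank_cubic c hc
  have hK2rank : Module.finrank ℚ ℚ⟮j * c⟯ = 3 := finrank_cubic (j * c) hjc
  -- finrank ℚ L ≤ 6
  have hcmem : c ∈ ℚ⟮c⟯ := IntermediateField.mem_adjoin_simple_self ℚ c
  have htop : IntermediateField.adjoin ℚ⟮c⟯ {j} = ⊤ := by
    apply IntermediateField.restrictScalars_injective ℚ
    rw [IntermediateField.restrictScalars_top]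
    erw [IntermediateField.adjoin_simple_adjoin_simple, Set.pair_comm, hL]
  have hLle : Module.finrank ℚ⟮c⟯ L ≤ 2 := by
    have hjint : IsIntegral ℚ⟮c⟯ j := IsIntegral.of_finite ℚ⟮c⟯ j
    have h1 := IntermediateField.adjoin.finrank hjint
    rw [htop, IntermediateField.finrank_top'] at h1
    have hne : (X ^ 2 + X + 1 : ℚ⟮c⟯[X]) ≠ 0 := by
      intro h
      have h2 := congrArg (Polynomial.eval 0) h
      simp at h2
    have haev : (Polynomial.aeval j) (X ^ 2 + X + 1 : ℚ⟮c⟯[X]) = 0 := by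
      simp only [map_add, aeval_X_pow, map_one, aeval_X]
      exact hjsq
    have hdle := minpoly.degree_le_of_ne_zero ℚ⟮c⟯ j hne haev
    have hdeg2 : (X ^ 2 + X + 1 : ℚ⟮c⟯[X]).degree = 2 := by compute_degree!
    rw [hdeg2] at hdle
    rw [h1]
    exact Polynomial.natDegree_le_iff_degree_le.mpr hdle
  have hLrank : Module.finrank ℚ L ≤ 6 := by
    have hmul := Module.finrank_mul_finrank ℚ ℚ⟮c⟯ L
    calc Module.finrank ℚ L = 3 * Module.finrank ℚ⟮c⟯ L := by rw [← hmul, hK1rank]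
      _ ≤ 3 * 2 := Nat.mul_le_mul_left _ hLle
      _ = 6 := rfl
  -- 3 ∈ 𝔮
  have h3Q : (3 : 𝓞 L) ∈ 𝔮 := by
    have h : (3 : ℤ) ∈ 𝔮.comap (algebraMap ℤ (𝓞 L)) := by
      rw [h𝔮]; exact Ideal.subset_span rfl
    rw [Ideal.mem_comap, map_ofNat] at h
    exact h
  -- elements of 𝓞 L
  have hcI : IsIntegral ℤ c := ⟨X ^ 3 - C 3, monic_X_pow_sub_C _ (by norm_num), by simp [hc]⟩
  have hjI : IsIntegral ℤ j := ⟨X ^ 3 - C 1, monic_X_pow_sub_C _ (by norm_num), by simp [hj3]⟩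
  set c₀ : 𝓞 L := ⟨c, hcI⟩ with hc₀def
  set j₀ : 𝓞 L := ⟨j, hjI⟩ with hj₀def
  have hc₀coe : algebraMap (𝓞 L) L c₀ = c := rfl
  have hj₀coe : algebraMap (𝓞 L) L j₀ = j := rfl
  have hc₀ : c₀ ^ 3 = 3 := NumberField.RingOfIntegers.coe_injective
    (by rw [map_pow, hc₀coe, map_ofNat]; exact hc)
  have hj₀3 : j₀ ^ 3 = 1 := NumberField.RingOfIntegers.coe_injective
    (by rw [map_pow, hj₀coe, map_one]; exact hj3)
  have hc₀Q : c₀ ∈ 𝔮 := hQp.mem_of_pow_mem 3 (by rw [hc₀]; exact h3Q)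
  have huj : IsUnit (-j₀ ^ 2) :=
    isUnit_iff_exists_inv.mpr ⟨-j₀, by rw [neg_mul_neg, ← pow_succ]; exact hj₀3⟩
  have hkeyL : -j ^ 2 * (1 - j) ^ 2 = (3 : L) := by
    linear_combination (2 - j) * hj3 - hjsq
  have hkey : (-j₀ ^ 2) * (1 - j₀) ^ 2 = 3 := NumberField.RingOfIntegers.coe_injective (by
    rw [_root_.map_mul, map_neg, map_pow, map_pow, map_sub, map_one, hj₀coe, map_ofNat]
    exact hkeyL)
  have h1jQ : (1 - j₀) ∈ 𝔮 := by
    have hm : (-j₀ ^ 2) * (1 - j₀) ^ 2 ∈ 𝔮 := by rw [hkey]; exact h3Q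
    rcases hQp.mem_or_mem hm with h | h
    · exact absurd (Ideal.eq_top_of_isUnit_mem _ h huj) hQp.ne_top
    · exact hQp.mem_of_pow_mem 2 h
  obtain ⟨hdvd3L, heL0⟩ :=
    aux_dvd L 𝔮 c₀ 1 isUnit_one (n := 3) (by norm_num) (by rw [one_mul]; exact hc₀) hc₀Q
  obtain ⟨hdvd2L, -⟩ := aux_dvd L 𝔮 (1 - j₀) (-j₀ ^ 2) huj (n := 2) (by norm_num) hkey h1jQ
  have h6 : 6 ∣ Ideal.ramificationIdx' (Ideal.span {(3 : ℤ)}) 𝔮 :=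
    Nat.Coprime.mul_dvd_of_dvd_of_dvd (by norm_num) hdvd2L hdvd3L
  have heL : Ideal.ramificationIdx' (Ideal.span {(3 : ℤ)}) 𝔮 = 6 :=
    le_antisymm (le_trans (aux_e_le L 𝔮 h𝔮) hLrank)
      (Nat.le_of_dvd (Nat.pos_of_ne_zero heL0) h6)
  -- the two cubic subfields
  haveI : NumberField ℚ⟮c⟯ := ⟨⟩
  haveI : NumberField ℚ⟮j * c⟯ := ⟨⟩
  have cubic_case : ∀ (K : IntermediateField ℚ L) (_ : NumberField K) (x : L) (hxK : x ∈ K)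
      (hx3 : x ^ 3 = 3) (hrk : Module.finrank ℚ K = 3),
      Ideal.ramificationIdx' (Ideal.span {(3 : ℤ)})
        (𝔮.comap (algebraMap (𝓞 K) (𝓞 L))) = 3 := by
    intro K _ x hxK hx3 hrk
    have hcomp : (algebraMap (𝓞 K) (𝓞 L)).comp (algebraMap ℤ (𝓞 K)) = algebraMap ℤ (𝓞 L) :=
      RingHom.ext_int _ _
    have hcomap : (𝔮.comap (algebraMap (𝓞 K) (𝓞 L))).comap (algebraMap ℤ (𝓞 K)) =
        Ideal.span {(3 : ℤ)} := by
      rw [Ideal.comap_comap, hcomp]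
      exact h𝔮
    haveI : (𝔮.comap (algebraMap (𝓞 K) (𝓞 L))).IsPrime := Ideal.IsPrime.comap _
    have hxK3 : (⟨x, hxK⟩ : K) ^ 3 = 3 := by
      apply Subtype.ext
      push_cast
      exact hx3
    have hxKI : IsIntegral ℤ (⟨x, hxK⟩ : K) :=
      ⟨X ^ 3 - C 3, monic_X_pow_sub_C _ (by norm_num), by simp [hxK3]⟩
    set x₁ : 𝓞 K := ⟨⟨x, hxK⟩, hxKI⟩ with hx₁def
    have hx₁coe : algebraMap (𝓞 K) K x₁ = ⟨x, hxK⟩ := rfl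
    have hx₁3 : x₁ ^ 3 = 3 := NumberField.RingOfIntegers.coe_injective
      (by rw [map_pow, hx₁coe, map_ofNat]; exact hxK3)
    have hx₁Q : x₁ ∈ 𝔮.comap (algebraMap (𝓞 K) (𝓞 L)) := by
      rw [Ideal.mem_comap]
      apply hQp.mem_of_pow_mem 3
      rw [← map_pow, hx₁3, map_ofNat]
      exact h3Q
    obtain ⟨hdvd, hne⟩ := aux_dvd K _ x₁ 1 isUnit_one (n := 3) (by norm_num)
      (by rw [one_mul]; exact hx₁3) hx₁Q
    have hle := aux_e_le K _ hcomap
    rw [hrk] at hle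
    exact le_antisymm hle (Nat.le_of_dvd (Nat.pos_of_ne_zero hne) hdvd)
  have he1 := cubic_case ℚ⟮c⟯ ‹_› c hcmem hc hK1rank
  have he2 := cubic_case ℚ⟮j * c⟯ ‹_› (j * c)
    (IntermediateField.mem_adjoin_simple_self ℚ (j * c)) hjc hK2rank
  refine ⟨heL, he1, he2, ?_⟩
  rw [heL, he1, he2]
  decide
end
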